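/- Let d ≥ 1, and let Ũ ∈ ℂ^{N×d} and V_1,…,V_{K−1} ∈ ℂ^{M×d} be truncated unitary (Ũ^H Ũ = I_d, V_j^H V_j = I_d). For each j let H_j, Ĥ_j ∈ ℂ^{N×M} with H_j ≠ 0, ‖Ĥ_j‖_F = 1, and suppose the alignment equations Ũ^H Ĥ_j V_j = 0 hold for all j. Set z_j = vec(H_j)/‖H_j‖_F, ẑ_j = vec(Ĥ_j), and B_max = max_j ‖H_j‖_F². Then for every P > 0 the interference leakage satisfies (P/d)·Σ_{j=1}^{K−1} ‖Ũ^H H_j V_j‖_F² ≤ 2·P·d·B_max·Σ_{j=1}^{K−1} (1 − |ẑ_j^H z_j|²). -/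

import Mathlib

open Matrix

/-- Squared Frobenius norm of a complex matrix. -/
noncomputable def frobNormSq {m n : Type*} [Fintype m] [Fintype n]
    (A : Matrix m n ℂ) : ℝ :=
  ∑ i, ∑ j, ‖A i j‖ ^ 2

/-- Frobenius norm of a complex matrix. -/
noncomputable def frobNorm {m n : Type*} [Fintype m] [Fintype n]
    (A : Matrix m n ℂ) : ℝ :=
  Real.sqrt (frobNormSq A)

/-- Frobenius (entrywise) Hermitian inner product `⟨A, B⟩ = ∑ᵢⱼ conj(Aᵢⱼ) Bᵢⱼ`,
i.e. `vec(A)ᴴ vec(B)`. -/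
noncomputable def matInner {m n : Type*} [Fintype m] [Fintype n]
    (A B : Matrix m n ℂ) : ℂ :=
  ∑ i, ∑ j, star (A i j) * B i j

lemma frobNormSq_nonneg {m n : Type*} [Fintype m] [Fintype n] (A : Matrix m n ℂ) :
    0 ≤ frobNormSq A :=
  Finset.sum_nonneg fun _ _ => Finset.sum_nonneg fun _ _ => sq_nonneg _

lemma frobNormSq_pos {m n : Type*} [Fintype m] [Fintype n] {A : Matrix m n ℂ}
    (hA : A ≠ 0) : 0 < frobNormSq A := by
  rcases (frobNormSq_nonneg A).lt_or_eq with h | h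
  · exact h
  · exfalso
    apply hA
    ext i j
    have h1 := (Finset.sum_eq_zero_iff_of_nonneg
      (fun i _ => Finset.sum_nonneg fun j _ => sq_nonneg (‖A i j‖))).mp h.symm
    have h2 := (Finset.sum_eq_zero_iff_of_nonneg
      (fun j _ => sq_nonneg (‖A i j‖))).mp (h1 i (Finset.mem_univ i))
    have := h2 j (Finset.mem_univ j)
    simpa using (pow_eq_zero_iff (two_ne_zero)).mp this

lemma frobNormSq_conjTranspose {m n : Type*} [Fintype m] [Fintype n]
    (A : Matrix m n ℂ) : frobNormSq Aᴴ = frobNormSq A := by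
  rw [frobNormSq, Finset.sum_comm]
  simp [frobNormSq, Matrix.conjTranspose_apply]

lemma frobNormSq_mul_le {m p n : Type*} [Fintype m] [Fintype p] [Fintype n]
    (A : Matrix m p ℂ) (B : Matrix p n ℂ) :
    frobNormSq (A * B) ≤ frobNormSq A * frobNormSq B := by
  have key : ∀ i j, ‖(A * B) i j‖ ^ 2
      ≤ (∑ l, ‖A i l‖ ^ 2) * (∑ l, ‖B l j‖ ^ 2) := by
    intro i j
    have h1 : ‖(A * B) i j‖ ≤ ∑ l, ‖A i l‖ * ‖B l j‖ := by
      rw [Matrix.mul_apply]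
      exact (norm_sum_le _ _).trans (le_of_eq (by simp [norm_mul]))
    have h2 : (∑ l, ‖A i l‖ * ‖B l j‖) ^ 2
        ≤ (∑ l, ‖A i l‖ ^ 2) * (∑ l, ‖B l j‖ ^ 2) :=
      Finset.sum_mul_sq_le_sq_mul_sq Finset.univ (fun l => ‖A i l‖)
        (fun l => ‖B l j‖)
    exact le_trans (pow_le_pow_left₀ (norm_nonneg _) h1 2) h2
  have e1 : frobNormSq (A * B)
      ≤ ∑ i, ∑ j, (∑ l, ‖A i l‖ ^ 2) * (∑ l, ‖B l j‖ ^ 2) :=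
    Finset.sum_le_sum fun i _ => Finset.sum_le_sum fun j _ => key i j
  have e2 : (∑ i, ∑ j, (∑ l, ‖A i l‖ ^ 2) * (∑ l, ‖B l j‖ ^ 2))
      = frobNormSq A * frobNormSq B := by
    simp_rw [← Finset.mul_sum, ← Finset.sum_mul]
    rw [frobNormSq, frobNormSq]
    congr 1
    exact Finset.sum_comm
  exact e2 ▸ e1

lemma frobNormSq_trunc {n d : ℕ} (U : Matrix (Fin n) (Fin d) ℂ) (hU : Uᴴ * U = 1) :
    frobNormSq U = d := by
  have h := congrArg Matrix.trace hU
  rw [Matrix.trace_one] at h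
  have h2 : ((∑ i : Fin d, ∑ j : Fin n, ‖U j i‖ ^ 2 : ℝ) : ℂ) = (d : ℂ) := by
    rw [Fintype.card_fin] at h
    rw [← h]
    push_cast
    simp only [Matrix.trace, Matrix.diag, Matrix.mul_apply, Matrix.conjTranspose_apply,
      Complex.star_def]
    refine Finset.sum_congr rfl fun i _ => Finset.sum_congr rfl fun j _ => ?_
    rw [← Complex.normSq_eq_conj_mul_self, ← Complex.sq_norm]
    push_cast
    ring
  have h3 : (∑ i : Fin d, ∑ j : Fin n, ‖U j i‖ ^ 2 : ℝ) = (d : ℝ) := by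
    exact_mod_cast h2
  rw [frobNormSq, Finset.sum_comm, h3]

lemma cross_sum {m n : Type*} [Fintype m] [Fintype n] (A B : Matrix m n ℂ) (γ : ℂ)
    (hγ : γ = matInner B A) :
    ∑ i, ∑ j, (A i j * (starRingEnd ℂ) (γ * B i j)).re = Complex.normSq γ := by
  have key : ∑ i, ∑ j, A i j * (starRingEnd ℂ) (γ * B i j)
      = (starRingEnd ℂ) γ * matInner B A := by
    rw [matInner, Finset.mul_sum]
    refine Finset.sum_congr rfl fun i _ => ?_
    rw [Finset.mul_sum]
    refine Finset.sum_congr rfl fun j _ => ?_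
    simp only [Complex.star_def, RingHom.map_mul]
    ring
  calc ∑ i, ∑ j, (A i j * (starRingEnd ℂ) (γ * B i j)).re
      = (∑ i, ∑ j, A i j * (starRingEnd ℂ) (γ * B i j)).re := by
        rw [Complex.re_sum]
        exact Finset.sum_congr rfl fun i _ => (Complex.re_sum _ _).symm
    _ = ((starRingEnd ℂ) γ * γ).re := by rw [key, ← hγ]
    _ = Complex.normSq γ := by rw [mul_comm, Complex.mul_conj, Complex.ofReal_re]

lemma frobNormSq_sub_proj {m n : Type*} [Fintype m] [Fintype n] (A B : Matrix m n ℂ)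
    (hB : frobNormSq B = 1) :
    frobNormSq (A - matInner B A • B)
      = frobNormSq A - ‖matInner B A‖ ^ 2 := by
  set γ := matInner B A with hγ
  have expand : ∀ i j, ‖(A - γ • B) i j‖ ^ 2
      = ‖A i j‖ ^ 2 + Complex.normSq γ * ‖B i j‖ ^ 2
        - 2 * (A i j * (starRingEnd ℂ) (γ * B i j)).re := by
    intro i j
    simp only [Matrix.sub_apply, Matrix.smul_apply, smul_eq_mul, Complex.sq_norm]
    rw [Complex.normSq_sub, Complex.normSq_mul]
  have hsum : frobNormSq (A - γ • B)
      = frobNormSq A + Complex.normSq γ * frobNormSq B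
        - 2 * ∑ i, ∑ j, (A i j * (starRingEnd ℂ) (γ * B i j)).re := by
    simp only [frobNormSq, expand, Finset.sum_sub_distrib, Finset.sum_add_distrib,
      ← Finset.mul_sum]
  rw [hsum, hB, cross_sum A B γ hγ, Complex.sq_norm]
  ring

/-- **Lemma 2 (deterministic core, appendix).**  Leakage bound for the
normalized-channel quantization scheme: with `z_j = vec(H_j)/‖H_j‖_F`,
`ẑ_j = vec(Ĥ_j)` and `B_max = max_j ‖H_j‖_F²`,
`(P/d) Σ_j ‖Ũᴴ H_j V_j‖_F² ≤ 2 P d B_max Σ_j (1 − |ẑ_jᴴ z_j|²)`. -/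
theorem normalized_channel_quantization_leakage_bound
    (k N M d : ℕ) (hk : 0 < k) (hd : 1 ≤ d)
    (U : Matrix (Fin N) (Fin d) ℂ) (hU : Uᴴ * U = 1)
    (V : Fin k → Matrix (Fin M) (Fin d) ℂ) (hV : ∀ j, (V j)ᴴ * V j = 1)
    (H Hhat : Fin k → Matrix (Fin N) (Fin M) ℂ)
    (hH : ∀ j, H j ≠ 0) (hHhat : ∀ j, frobNorm (Hhat j) = 1)
    (hIA : ∀ j, Uᴴ * Hhat j * V j = 0)
    (Bmax : ℝ) (hBmax : Bmax = ⨆ j, frobNormSq (H j))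
    (P : ℝ) (hP : 0 < P) :
    (P / d) * ∑ j, frobNormSq (Uᴴ * H j * V j)
      ≤ 2 * P * d * Bmax *
        ∑ j, (1 - ‖matInner (Hhat j) (H j) / (frobNorm (H j) : ℂ)‖ ^ 2) := by
  have hNE : Nonempty (Fin k) := ⟨⟨0, hk⟩⟩
  have hd' : (1 : ℝ) ≤ (d : ℝ) := by exact_mod_cast hd
  have hd0 : (0 : ℝ) < d := lt_of_lt_of_le one_pos hd'
  set γ : Fin k → ℂ := fun j => matInner (Hhat j) (H j) with hγdef
  set t : Fin k → ℝ :=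
    fun j => 1 - ‖matInner (Hhat j) (H j) / (frobNorm (H j) : ℂ)‖ ^ 2 with htdef
  have hnsq : ∀ j, 0 < frobNormSq (H j) := fun j => frobNormSq_pos (hH j)
  have hHhatsq : ∀ j, frobNormSq (Hhat j) = 1 := by
    intro j
    have h1 := hHhat j
    rw [frobNorm] at h1
    have h0 := frobNormSq_nonneg (Hhat j)
    nlinarith [Real.sq_sqrt h0]
  have hproj : ∀ j, frobNormSq (H j - γ j • Hhat j)
      = frobNormSq (H j) - ‖γ j‖ ^ 2 := fun j =>
    frobNormSq_sub_proj (H j) (Hhat j) (hHhatsq j)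
  have hγle : ∀ j, ‖γ j‖ ^ 2 ≤ frobNormSq (H j) := by
    intro j
    have h0 := frobNormSq_nonneg (H j - γ j • Hhat j)
    linarith [hproj j]
  have hterm : ∀ j, t j
      = (frobNormSq (H j) - ‖γ j‖ ^ 2) / frobNormSq (H j) := by
    intro j
    have hn0 : (0 : ℝ) < frobNorm (H j) := Real.sqrt_pos.mpr (hnsq j)
    have hsq : frobNorm (H j) ^ 2 = frobNormSq (H j) :=
      Real.sq_sqrt (frobNormSq_nonneg (H j))
    show 1 - ‖matInner (Hhat j) (H j) / (frobNorm (H j) : ℂ)‖ ^ 2 = _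
    rw [norm_div, Complex.norm_real, Real.norm_eq_abs, abs_of_pos hn0, div_pow, hsq,
      eq_div_iff (hnsq j).ne', sub_mul, div_mul_cancel₀ _ (hnsq j).ne', one_mul]
  have ht0 : ∀ j, 0 ≤ t j := by
    intro j
    rw [hterm j]
    exact div_nonneg (by linarith [hγle j]) (hnsq j).le
  have hBle : ∀ j, frobNormSq (H j) ≤ Bmax := by
    intro j
    rw [hBmax]
    exact le_ciSup (f := fun j => frobNormSq (H j))
      (Set.Finite.bddAbove (Set.finite_range _)) j
  have hB0 : (0 : ℝ) ≤ Bmax := le_trans (hnsq ⟨0, hk⟩).le (hBle _)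
  have hmain : ∀ j, frobNormSq (Uᴴ * H j * V j) ≤ (d : ℝ) ^ 2 * (Bmax * t j) := by
    intro j
    have heq : Uᴴ * H j * V j = Uᴴ * (H j - γ j • Hhat j) * V j := by
      rw [Matrix.mul_sub, Matrix.sub_mul, Matrix.mul_smul, Matrix.smul_mul, hIA j,
        smul_zero, sub_zero]
    have hXt : frobNormSq (H j - γ j • Hhat j) ≤ Bmax * t j := by
      rw [hproj j, hterm j]
      have e : frobNormSq (H j) - ‖γ j‖ ^ 2
          = frobNormSq (H j) * ((frobNormSq (H j) - ‖γ j‖ ^ 2) / frobNormSq (H j)) := by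
        rw [mul_comm, div_mul_cancel₀ _ (hnsq j).ne']
      nth_rewrite 1 [e]
      exact mul_le_mul_of_nonneg_right (hBle j)
        (div_nonneg (by linarith [hγle j]) (hnsq j).le)
    rw [heq]
    calc frobNormSq (Uᴴ * (H j - γ j • Hhat j) * V j)
        ≤ frobNormSq (Uᴴ * (H j - γ j • Hhat j)) * frobNormSq (V j) := frobNormSq_mul_le _ _
      _ ≤ (frobNormSq Uᴴ * frobNormSq (H j - γ j • Hhat j)) * frobNormSq (V j) :=
          mul_le_mul_of_nonneg_right (frobNormSq_mul_le _ _) (frobNormSq_nonneg _)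
      _ = (d : ℝ) * frobNormSq (H j - γ j • Hhat j) * (d : ℝ) := by
          rw [frobNormSq_conjTranspose, frobNormSq_trunc U hU, frobNormSq_trunc (V j) (hV j)]
      _ ≤ (d : ℝ) * (Bmax * t j) * (d : ℝ) := by
          apply mul_le_mul_of_nonneg_right _ hd0.le
          exact mul_le_mul_of_nonneg_left hXt hd0.le
      _ = (d : ℝ) ^ 2 * (Bmax * t j) := by ring
  have hsum : ∑ j, frobNormSq (Uᴴ * H j * V j) ≤ (d : ℝ) ^ 2 * Bmax * ∑ j, t j := by
    calc ∑ j, frobNormSq (Uᴴ * H j * V j)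
        ≤ ∑ j, (d : ℝ) ^ 2 * (Bmax * t j) := Finset.sum_le_sum fun j _ => hmain j
      _ = (d : ℝ) ^ 2 * Bmax * ∑ j, t j := by
          rw [Finset.mul_sum]
          exact Finset.sum_congr rfl fun j _ => by ring
  have hst : (0 : ℝ) ≤ ∑ j, t j := Finset.sum_nonneg fun j _ => ht0 j
  calc (P / d) * ∑ j, frobNormSq (Uᴴ * H j * V j)
      ≤ (P / d) * ((d : ℝ) ^ 2 * Bmax * ∑ j, t j) :=
        mul_le_mul_of_nonneg_left hsum (div_pos hP hd0).le
    _ = P * d * Bmax * ∑ j, t j := by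
        field_simp
    _ ≤ 2 * P * d * Bmax * ∑ j, t j := by
        nlinarith [mul_nonneg (mul_nonneg (mul_nonneg hP.le hd0.le) hB0) hst]
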